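/- Let i and n be natural numbers and let A be a left brace of cardinality p^n for a prime p with p > n+1. Then p^i·A = {p^i·a : a ∈ A} is an ideal of A for each i, and A^{∘p^i} = p^i·A, where A^{∘p^i} denotes the subgroup of the group (A,∘) generated by the elements a^{∘p^i} for a ∈ A (the product of p^i copies of a under ∘). -/

import Mathlib

set_option maxRecDepth 8000

universe u

/-- A left brace: `(A,+)` abelian group, `(A,∘)` a group, with
`a∘(b+c)+a = a∘b+a∘c`. -/
structure LeftBrace (A : Type u) [AddCommGroup A] where
  circ : A → A → A
  one : A
  inv : A → A
  circ_assoc : ∀ a b c : A, circ (circ a b) c = circ a (circ b c)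
  one_circ : ∀ a : A, circ one a = a
  circ_one : ∀ a : A, circ a one = a
  inv_circ : ∀ a : A, circ (inv a) a = one
  circ_add : ∀ a b c : A, circ a (b + c) + a = circ a b + circ a c

/-- `a*b = a∘b - a - b`. -/
def LeftBrace.star {A : Type u} [AddCommGroup A] (B : LeftBrace A) (a b : A) : A :=
  B.circ a b - a - b

/-- `ann(k) = {a : k•a = 0}`, as an additive subgroup. -/
def annSub (A : Type u) [AddCommGroup A] (k : ℕ) : AddSubgroup A where
  carrier := {a : A | k • a = 0}
  zero_mem' := by simp
  add_mem' := by
    intro a b ha hb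
    have ha' : k • a = 0 := ha
    have hb' : k • b = 0 := hb
    show k • (a + b) = 0
    rw [smul_add, ha', hb', add_zero]
  neg_mem' := by
    intro a ha
    have ha' : k • a = 0 := ha
    show k • (-a) = 0
    rw [smul_neg, ha', neg_zero]

/-- The coset `[a]` of `a` in `A/ann(k)`. -/
def qmk {A : Type u} [AddCommGroup A] (k : ℕ) (a : A) : A ⧸ annSub A k :=
  QuotientAddGroup.mk a

/-- Evaluation of a non-associative word under a binary operation `op`,
substituting `f i` for the variable `i`. -/
def wEval {α : Type*} {β : Type*} (op : β → β → β) (f : α → β) : FreeMagma α → β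
  | FreeMagma.of a => f a
  | FreeMagma.mul x y => op (wEval op f x) (wEval op f y)

/-- The list of leaves (occurrences of variables, left to right) of a word. -/
def wLeaves {α : Type*} : FreeMagma α → List α
  | FreeMagma.of a => [a]
  | FreeMagma.mul x y => wLeaves x ++ wLeaves y

/-- The last (rightmost) variable of a word. -/
def wLast {α : Type*} : FreeMagma α → α
  | FreeMagma.of a => a
  | FreeMagma.mul _ y => wLast y

/-- The number of occurrences of the variable `a` in a word. -/
def wCount {α : Type*} [DecidableEq α] (a : α) : FreeMagma α → ℕ
  | FreeMagma.of b => if b = a then 1 else 0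
  | FreeMagma.mul x y => wCount a x + wCount a y

/-- The length (number of variable occurrences) of a word. -/
def wLen {α : Type*} : FreeMagma α → ℕ
  | FreeMagma.of _ => 1
  | FreeMagma.mul x y => wLen x + wLen y

/-- Left-normed product `a₁·(a₂·(⋯(aₘ·b)⋯))`. -/
def leftProd {Q : Type*} (mul : Q → Q → Q) : List Q → Q → Q
  | [], b => b
  | a :: l, b => mul a (leftProd mul l b)

/-- `circPow B a k` is the product of `k` copies of `a` under `∘`. -/
def circPow {A : Type u} [AddCommGroup A] (B : LeftBrace A) (a : A) : ℕ → A
  | 0 => B.one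
  | k + 1 => B.circ a (circPow B a k)

/-- `eSeq B a (i-1)` is `a_i`, where `a_1 = a` and `a_{i+1} = a * a_i`. -/
def eSeq {A : Type u} [AddCommGroup A] (B : LeftBrace A) (a : A) : ℕ → A
  | 0 => a
  | i + 1 => B.star a (eSeq B a i)

/-- `starIter B a b (i-1)` is `e_i`, where `e_1 = a*b` and `e_{i+1} = a*e_i`. -/
def starIter {A : Type u} [AddCommGroup A] (B : LeftBrace A) (a b : A) : ℕ → A
  | 0 => B.star a b
  | i + 1 => B.star a (starIter B a b i)

/-- `iterOp op u v i` is `u ⊙ (u ⊙ (⋯ (u ⊙ v)))` with `i` applications of `u ⊙ ·`. -/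
def iterOp {Q : Type*} (op : Q → Q → Q) (u v : Q) : ℕ → Q
  | 0 => v
  | i + 1 => op u (iterOp op u v i)

/-- `f(a) = Σ_{i=1}^{p−1} (C(p−1,i−1)/i)·e_i` where `e_1 = a`, `e_{i+1} = a*e_i`. -/
def fMap {A : Type u} [AddCommGroup A] (B : LeftBrace A) (p : ℕ) (a : A) : A :=
  ∑ i ∈ Finset.Icc 1 (p - 1), (Nat.choose (p - 1) (i - 1) / i) • eSeq B a (i - 1)

/-- `braceChainAux B (i-1)` is `A^i`: `A^1 = A`, `A^{i+1}` the additive subgroup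
generated by `{x*y : x ∈ A, y ∈ A^i}`. -/
def braceChainAux {A : Type u} [AddCommGroup A] (B : LeftBrace A) : ℕ → AddSubgroup A
  | 0 => ⊤
  | i + 1 => AddSubgroup.closure {z : A | ∃ x : A, ∃ y ∈ braceChainAux B i, z = B.star x y}

/-- `dSeq B a b i = (d_i, d_i')`: `d_0 = a`, `d_0' = b`, `d_{i+1} = d_i + d_i'`,
`d_{i+1}' = d_i * d_i'`. -/
def dSeq {A : Type u} [AddCommGroup A] (B : LeftBrace A) (a b : A) : ℕ → A × A
  | 0 => (a, b)
  | i + 1 => ((dSeq B a b i).1 + (dSeq B a b i).2, B.star (dSeq B a b i).1 (dSeq B a b i).2)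


section Stmt14Aux

open Finset

variable {A : Type u} [AddCommGroup A]

theorem LeftBrace.circ_zero (B : LeftBrace A) (a : A) : B.circ a 0 = a := by
  have h := B.circ_add a 0 a
  rw [zero_add] at h
  have h2 : B.circ a a + a = B.circ a a + B.circ a 0 := h.trans (add_comm _ _)
  exact (add_left_cancel h2).symm

theorem LeftBrace.one_eq_zero (B : LeftBrace A) : B.one = 0 := by
  have h1 := B.circ_zero B.one
  have h2 := B.one_circ (0 : A)
  rw [h2] at h1
  exact h1.symm

theorem LeftBrace.circ_add' (B : LeftBrace A) (a b c : A) :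
    B.circ a (b + c) = B.circ a b + B.circ a c - a := by
  have h := B.circ_add a b c
  rw [← h]; abel

theorem LeftBrace.circ_sub (B : LeftBrace A) (a u v : A) :
    B.circ a (u - v) = B.circ a u - B.circ a v + a := by
  have h := B.circ_add' a (u - v) v
  have huv : u - v + v = u := by abel
  rw [huv] at h
  rw [h]; abel

/-- `λ_a` as an additive homomorphism. -/
def lamHom (B : LeftBrace A) (a : A) : A →+ A where
  toFun x := B.circ a x - a
  map_zero' := by
    show B.circ a 0 - a = 0
    rw [B.circ_zero]; exact sub_self a
  map_add' x y := by
    show B.circ a (x + y) - a = (B.circ a x - a) + (B.circ a y - a)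
    rw [B.circ_add' a x y]; abel

theorem lamHom_apply (B : LeftBrace A) (a x : A) : lamHom B a x = B.circ a x - a := rfl

theorem circ_eq_add_lam (B : LeftBrace A) (a x : A) : B.circ a x = a + lamHom B a x := by
  rw [lamHom_apply]; abel

theorem lam_lam (B : LeftBrace A) (a b x : A) :
    lamHom B a (lamHom B b x) = lamHom B (B.circ a b) x := by
  rw [lamHom_apply, lamHom_apply, lamHom_apply, B.circ_sub, B.circ_assoc]
  abel

theorem lam_one (B : LeftBrace A) (x : A) : lamHom B B.one x = x := by
  rw [lamHom_apply, B.one_circ, B.one_eq_zero, sub_zero]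

theorem LeftBrace.circ_inv (B : LeftBrace A) (a : A) : B.circ a (B.inv a) = B.one := by
  have h1 : B.circ (B.inv a) (B.circ a (B.inv a)) = B.inv a := by
    rw [← B.circ_assoc, B.inv_circ, B.one_circ]
  have h2 : B.circ (B.inv (B.inv a)) (B.circ (B.inv a) (B.circ a (B.inv a)))
      = B.circ (B.inv (B.inv a)) (B.inv a) := congrArg _ h1
  rw [← B.circ_assoc, B.inv_circ, B.one_circ] at h2
  exact h2

theorem lam_inv_lam (B : LeftBrace A) (a x : A) :
    lamHom B (B.inv a) (lamHom B a x) = x := by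
  rw [lam_lam, B.inv_circ, lam_one]

theorem lam_lam_inv (B : LeftBrace A) (a x : A) :
    lamHom B a (lamHom B (B.inv a) x) = x := by
  rw [lam_lam, B.circ_inv, lam_one]

/-- `a * ·` as an additive homomorphism. -/
def starHom (B : LeftBrace A) (a : A) : A →+ A := lamHom B a - AddMonoidHom.id A

theorem starHom_apply (B : LeftBrace A) (a x : A) : starHom B a x = B.star a x := rfl

theorem star_eq_lam_sub (B : LeftBrace A) (a x : A) : B.star a x = lamHom B a x - x := rfl

theorem starHom_eq (B : LeftBrace A) (a x : A) : starHom B a x = lamHom B a x - x := rfl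

/- chain lemmas -/

theorem star_mem_chain (B : LeftBrace A) {i : ℕ} (x : A) {y : A}
    (hy : y ∈ braceChainAux B i) : B.star x y ∈ braceChainAux B (i + 1) :=
  AddSubgroup.subset_closure ⟨x, y, hy, rfl⟩

theorem chain_succ_le (B : LeftBrace A) : ∀ i, braceChainAux B (i + 1) ≤ braceChainAux B i
  | 0 => le_top
  | i + 1 => by
    apply (AddSubgroup.closure_le _).2
    rintro z ⟨x, y, hy, rfl⟩
    exact star_mem_chain B x (chain_succ_le B i hy)

theorem chain_antitone (B : LeftBrace A) {j k : ℕ} (h : j ≤ k) :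
    braceChainAux B k ≤ braceChainAux B j :=
  antitone_nat_of_succ_le (chain_succ_le B) h

theorem lam_mem_chain (B : LeftBrace A) : ∀ (i : ℕ) (a : A) {x : A},
    x ∈ braceChainAux B i → lamHom B a x ∈ braceChainAux B i
  | 0, a, x, _ => AddSubgroup.mem_top _
  | i + 1, a, x, hx => by
    refine AddSubgroup.closure_induction ?_ ?_ ?_ ?_ hx
    · rintro z ⟨u, y, hy, rfl⟩
      have hrw : lamHom B a (B.star u y) = B.star (B.circ a u) y - B.star a y := by
        rw [star_eq_lam_sub B u y, star_eq_lam_sub, star_eq_lam_sub, map_sub, lam_lam]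
        abel
      rw [hrw]
      exact sub_mem (star_mem_chain B _ hy) (star_mem_chain B _ hy)
    · rw [map_zero]; exact zero_mem _
    · intro u v _ _ hu hv
      rw [map_add]; exact add_mem hu hv
    · intro u _ hu
      rw [map_neg]; exact neg_mem hu

/- Group structure on `(A, ∘)` -/

def CG (A : Type u) [AddCommGroup A] (B : LeftBrace A) : Type u := A

instance instGroupCG (B : LeftBrace A) : Group (CG A B) where
  mul a b := B.circ a b
  one := B.one
  inv := B.inv
  mul_assoc := B.circ_assoc
  one_mul := B.one_circ
  mul_one := B.circ_one
  inv_mul_cancel := B.inv_circ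

theorem cg_mul_def (B : LeftBrace A) (a b : CG A B) : a * b = B.circ a b := rfl
theorem cg_one_def (B : LeftBrace A) : (1 : CG A B) = B.one := rfl

/- The ascending annihilator-type chain for left nilpotency. -/

def Fch (B : LeftBrace A) : ℕ → AddSubgroup A
  | 0 => ⊥
  | j + 1 =>
    { carrier := {b : A | ∀ a : A, starHom B a b ∈ Fch B j}
      zero_mem' := fun a => by rw [map_zero]; exact zero_mem _
      add_mem' := fun hx hy a => by rw [map_add]; exact add_mem (hx a) (hy a)
      neg_mem' := fun hx a => by rw [map_neg]; exact neg_mem (hx a) }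

theorem mem_Fch_succ (B : LeftBrace A) {j : ℕ} {b : A} :
    b ∈ Fch B (j + 1) ↔ ∀ a : A, starHom B a b ∈ Fch B j := Iff.rfl

theorem Fch_lam (B : LeftBrace A) : ∀ (j : ℕ) (a : A) {b : A},
    b ∈ Fch B j → lamHom B a b ∈ Fch B j
  | 0, a, b, hb => by
    have hb0 : b = 0 := by
      rw [show Fch B 0 = ⊥ from rfl, AddSubgroup.mem_bot] at hb; exact hb
    rw [hb0, map_zero]
    exact zero_mem _
  | j + 1, a, b, hb => by
    intro c
    have hrw : starHom B c (lamHom B a b) = starHom B (B.circ c a) b - starHom B a b := by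
      rw [starHom_eq, starHom_eq, starHom_eq, lam_lam]
      abel
    rw [hrw]
    exact sub_mem (hb (B.circ c a)) (hb a)

theorem Fch_mono (B : LeftBrace A) (j : ℕ) : Fch B j ≤ Fch B (j + 1) := by
  intro b hb a
  rw [starHom_apply, star_eq_lam_sub]
  exact sub_mem (Fch_lam B j a hb) hb

theorem Fch_exists (B : LeftBrace A) (p n : ℕ) [hp : Fact p.Prime] [Finite A]
    (hcard : Nat.card A = p ^ n) (j : ℕ) (hne : Fch B j ≠ ⊤) :
    ∃ b, b ∈ Fch B (j + 1) ∧ b ∉ Fch B j := by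
  classical
  have hmap : ∀ g : A, Fch B j ≤ (Fch B j).comap (lamHom B g) :=
    fun g x hx => Fch_lam B j g hx
  letI : SMul (CG A B) (A ⧸ Fch B j) :=
    ⟨fun g q => QuotientAddGroup.map (Fch B j) (Fch B j) (lamHom B g) (hmap g) q⟩
  have smul_mk : ∀ (g : CG A B) (x : A),
      (g • (QuotientAddGroup.mk x : A ⧸ Fch B j)) =
        QuotientAddGroup.mk (lamHom B g x) := fun g x => rfl
  letI : MulAction (CG A B) (A ⧸ Fch B j) :=
    { one_smul := fun q => by
        refine QuotientAddGroup.induction_on q (fun x => ?_)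
        rw [smul_mk]
        exact congrArg _ (lam_one B x)
      mul_smul := fun g h q => by
        refine QuotientAddGroup.induction_on q (fun x => ?_)
        rw [smul_mk, smul_mk, smul_mk, lam_lam B g h x]
        rfl }
  haveI : Finite (A ⧸ Fch B j) := Quotient.finite _
  have hPG : IsPGroup p (CG A B) := IsPGroup.of_card (hcard : Nat.card (CG A B) = p ^ n)
  have h0 : (0 : A ⧸ Fch B j) ∈ MulAction.fixedPoints (CG A B) (A ⧸ Fch B j) := by
    intro g
    show (QuotientAddGroup.map (Fch B j) (Fch B j) (lamHom B g) (hmap g)) 0 = 0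
    exact map_zero _
  have hdvd : p ∣ Nat.card (A ⧸ Fch B j) := by
    have h1 : Nat.card (A ⧸ Fch B j) ∣ p ^ n :=
      hcard ▸ AddSubgroup.card_quotient_dvd_card (Fch B j)
    obtain ⟨k, hk, hcardQ⟩ := (Nat.dvd_prime_pow hp.out).1 h1
    rcases k with _ | k
    · exfalso
      rw [pow_zero] at hcardQ
      haveI hsub : Subsingleton (A ⧸ Fch B j) := (Nat.card_eq_one_iff_unique.1 hcardQ).1
      apply hne
      ext x
      simp only [AddSubgroup.mem_top, iff_true]
      exact (QuotientAddGroup.eq_zero_iff x).1 (Subsingleton.elim _ _)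
    · rw [hcardQ]
      exact dvd_pow_self p k.succ_ne_zero
  obtain ⟨q, hqfix, hqne⟩ :=
    hPG.exists_fixed_point_of_prime_dvd_card_of_fixed_point (A ⧸ Fch B j) hdvd h0
  obtain ⟨b, rfl⟩ := QuotientAddGroup.mk_surjective q
  refine ⟨b, ?_, ?_⟩
  · intro a
    have h := hqfix (show CG A B from a)
    rw [smul_mk] at h
    have h2 := (QuotientAddGroup.eq (s := Fch B j)).1 h
    have : starHom B a b = -(-(lamHom B a b) + b) := by
      rw [starHom_apply, star_eq_lam_sub]; abel
    rw [this]
    exact neg_mem h2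
  · intro hbF
    exact hqne ((QuotientAddGroup.eq_zero_iff b).2 hbF).symm

theorem chain_bot (B : LeftBrace A) (p n : ℕ) (hp : p.Prime)
    (hcard : Nat.card A = p ^ n) : braceChainAux B n = ⊥ := by
  haveI : Fact p.Prime := ⟨hp⟩
  haveI : Finite A := Nat.finite_of_card_ne_zero
    (by rw [hcard]; exact pow_ne_zero n hp.pos.ne')
  have key : ∀ j, Fch B j = ⊤ ∨ p ^ j ≤ Nat.card (Fch B j) := by
    intro j
    induction j with
    | zero =>
      right
      rw [pow_zero]
      have : Nat.card (Fch B 0) = 1 := by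
        show Nat.card (⊥ : AddSubgroup A) = 1
        simp
      omega
    | succ j ih =>
      by_cases hT : Fch B j = ⊤
      · left
        apply eq_top_iff.2
        rw [← hT]
        exact Fch_mono B j
      by_cases hT' : Fch B (j + 1) = ⊤
      · left; exact hT'
      rcases ih with h | hle
      · exact absurd h hT
      right
      obtain ⟨b, hb1, hb2⟩ := Fch_exists B p n hcard j hT
      have hlt : Nat.card (Fch B j) < Nat.card (Fch B (j + 1)) := by
        have hc1 : Nat.card (Fch B j) = (Fch B j : Set A).ncard :=
          Nat.card_coe_set_eq _
        have hc2 : Nat.card (Fch B (j + 1)) = (Fch B (j + 1) : Set A).ncard :=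
          Nat.card_coe_set_eq _
        rw [hc1, hc2]
        refine Set.ncard_lt_ncard ?_ (Set.toFinite _)
        constructor
        · exact fun x hx => Fch_mono B j hx
        · intro hsub
          exact hb2 (hsub hb1)
      have hd1 : Nat.card (Fch B (j + 1)) ∣ p ^ n :=
        hcard ▸ AddSubgroup.card_addSubgroup_dvd_card (Fch B (j + 1))
      obtain ⟨s, hs, hcs⟩ := (Nat.dvd_prime_pow hp).1 hd1
      have hd2 : Nat.card (Fch B j) ∣ p ^ s :=
        hcs ▸ AddSubgroup.card_dvd_of_le (Fch_mono B j)
      obtain ⟨t, ht, hct⟩ := (Nat.dvd_prime_pow hp).1 hd2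
      have hjt : j ≤ t := by
        have : p ^ j ≤ p ^ t := le_trans hle (le_of_eq hct)
        exact (pow_le_pow_iff_right₀ hp.one_lt).1 this
      have hts : t < s := by
        have : p ^ t < p ^ s := by rw [← hct, ← hcs]; exact hlt
        exact (pow_lt_pow_iff_right₀ hp.one_lt).1 this
      rw [hcs]
      exact pow_le_pow_right₀ hp.one_lt.le (by omega)
  have hFn : Fch B n = ⊤ := by
    rcases key n with h | hle
    · exact h
    have hd : Nat.card (Fch B n) ∣ p ^ n :=
      hcard ▸ AddSubgroup.card_addSubgroup_dvd_card (Fch B n)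
    have hpos : 0 < p ^ n := pow_pos hp.pos n
    have heq : Nat.card (Fch B n) = p ^ n :=
      Nat.le_antisymm (Nat.le_of_dvd hpos hd) hle
    exact AddSubgroup.eq_top_of_card_eq _ (heq.trans hcard.symm)
  have hchain : ∀ j, braceChainAux B j ≤ Fch B (n - j) := by
    intro j
    induction j with
    | zero =>
      rw [Nat.sub_zero, hFn]
      exact le_top
    | succ j ih =>
      apply (AddSubgroup.closure_le _).2
      rintro z ⟨x, y, hy, rfl⟩
      have hy' : y ∈ Fch B (n - j) := ih hy
      rcases Nat.lt_or_ge j n with hj | hj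
      · have hnj : n - j = (n - (j + 1)) + 1 := by omega
        rw [hnj] at hy'
        exact hy' x
      · have h0 : n - j = 0 := by omega
        rw [h0] at hy'
        have hy0 : y = 0 := by
          simpa [Fch, AddSubgroup.mem_bot] using hy'
        have : B.star x y = 0 := by
          rw [hy0, ← starHom_apply, map_zero]
        rw [this]
        exact zero_mem _
  have h := hchain n
  rw [Nat.sub_self] at h
  exact le_bot_iff.1 h

/- ∘-powers and the binomial formula -/

theorem circ_eq_add_add_star (B : LeftBrace A) (a x : A) :
    B.circ a x = a + x + B.star a x := by
  show B.circ a x = a + x + (B.circ a x - a - x)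
  abel

theorem circPow_formula (B : LeftBrace A) (a : A) :
    ∀ m, circPow B a m = ∑ j ∈ Finset.range m, (m.choose (j + 1)) • iterOp B.star a a j := by
  intro m
  induction m with
  | zero => simp [circPow, B.one_eq_zero]
  | succ m ih =>
    have hstep : circPow B a (m + 1) = B.circ a (circPow B a m) := rfl
    rw [hstep, circ_eq_add_add_star, ih]
    have hstar : B.star a (∑ j ∈ Finset.range m, (m.choose (j + 1)) • iterOp B.star a a j)
        = ∑ j ∈ Finset.range m, (m.choose (j + 1)) • iterOp B.star a a (j + 1) := by
      rw [← starHom_apply, map_sum]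
      refine Finset.sum_congr rfl (fun j _ => ?_)
      rw [map_nsmul]
      rfl
    rw [hstar]
    rw [Finset.sum_range_succ' (fun j => ((m + 1).choose (j + 1)) • iterOp B.star a a j) m]
    have hfm : (m.choose (m + 1)) • iterOp B.star a a m = 0 := by
      rw [Nat.choose_succ_self, zero_smul]
    have hf0 : (m.choose (0 + 1)) • iterOp B.star a a 0 = m • a := by
      show m.choose 1 • a = m • a
      rw [Nat.choose_one_right]
    have hfr0 : ((m + 1).choose (0 + 1)) • iterOp B.star a a 0 = (m + 1) • a := by
      show (m + 1).choose 1 • a = (m + 1) • a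
      rw [Nat.choose_one_right]
    have hLsplit : (∑ j ∈ Finset.range m, (m.choose (j + 1)) • iterOp B.star a a j)
        = (∑ x ∈ Finset.range m, (m.choose (x + 1 + 1)) • iterOp B.star a a (x + 1))
          + m • a := by
      have e2 := Finset.sum_range_succ' (fun j => (m.choose (j + 1)) • iterOp B.star a a j) m
      rw [Finset.sum_range_succ, hfm, add_zero, hf0] at e2
      exact e2
    have hpascal : ∀ x : ℕ, ((m + 1).choose (x + 1 + 1)) • iterOp B.star a a (x + 1)
        = (m.choose (x + 1 + 1)) • iterOp B.star a a (x + 1)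
          + (m.choose (x + 1)) • iterOp B.star a a (x + 1) := by
      intro x
      rw [← add_nsmul]
      have : (m + 1).choose (x + 1 + 1) = m.choose (x + 1 + 1) + m.choose (x + 1) := by
        rw [Nat.choose_succ_succ m (x + 1), Nat.add_comm]
      rw [this]
    have hR : ∑ x ∈ Finset.range m, ((m + 1).choose (x + 1 + 1)) • iterOp B.star a a (x + 1)
        = (∑ x ∈ Finset.range m, (m.choose (x + 1 + 1)) • iterOp B.star a a (x + 1))
          + ∑ x ∈ Finset.range m, (m.choose (x + 1)) • iterOp B.star a a (x + 1) := by
      rw [← Finset.sum_add_distrib]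
      exact Finset.sum_congr rfl (fun x _ => hpascal x)
    rw [hR, hfr0, hLsplit, succ_nsmul]
    abel

theorem iterOp_star_mem_chain (B : LeftBrace A) (b c : A) (d : ℕ)
    (hc : c ∈ braceChainAux B d) :
    ∀ j, iterOp B.star b c j ∈ braceChainAux B (d + j)
  | 0 => hc
  | j + 1 => star_mem_chain B b (iterOp_star_mem_chain B b c d hc j)

theorem iterOp_star_nsmul (B : LeftBrace A) (b c : A) (k : ℕ) (hb : b = k • c) :
    ∀ j, iterOp B.star b b j = k • iterOp B.star b c j
  | 0 => hb
  | j + 1 => by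
    show B.star b (iterOp B.star b b j) = k • B.star b (iterOp B.star b c j)
    rw [iterOp_star_nsmul B b c k hb j, ← starHom_apply, ← starHom_apply, map_nsmul]

theorem key1 (B : LeftBrace A) (p n : ℕ) (hp : p.Prime) (hpn : n + 1 < p)
    (hbot : braceChainAux B n = ⊥) (k d : ℕ) (b c : A) (hb : b = k • c)
    (hc : c ∈ braceChainAux B d) :
    ∃ w ∈ braceChainAux B (d + 1), circPow B b p = (p * k) • (c + w) := by
  obtain ⟨m, rfl⟩ : ∃ m, p = m + 1 := ⟨p - 1, by omega⟩
  set e : ℕ → A := iterOp B.star b c with he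
  have he_mem : ∀ j, e j ∈ braceChainAux B (d + j) :=
    iterOp_star_mem_chain B b c d hc
  have hbb : ∀ j, iterOp B.star b b j = k • e j := iterOp_star_nsmul B b c k hb
  set wj : ℕ → A := fun j =>
    if j + 2 = m + 1 then 0 else (((m + 1).choose (j + 2)) / (m + 1)) • e (j + 1) with hwj
  have hw_mem : ∀ j, wj j ∈ braceChainAux B (d + 1) := by
    intro j
    simp only [hwj]
    by_cases hcase : j + 2 = m + 1
    · rw [if_pos hcase]; exact zero_mem _
    · rw [if_neg hcase]
      refine AddSubgroup.nsmul_mem _ ?_ _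
      exact chain_antitone B (by omega) (he_mem (j + 1))
  have hterm : ∀ j ∈ Finset.range m,
      ((m + 1).choose (j + 2)) • e (j + 1) = (m + 1) • wj j := by
    intro j hj
    rw [Finset.mem_range] at hj
    by_cases hcase : j + 2 = m + 1
    · simp only [hwj, if_pos hcase]
      rw [smul_zero]
      have hzero : e (j + 1) = 0 := by
        have h1 : e (j + 1) ∈ braceChainAux B (d + (j + 1)) := he_mem (j + 1)
        have h2 : braceChainAux B (d + (j + 1)) ≤ braceChainAux B n :=
          chain_antitone B (by omega)
        have := h2 h1
        rw [hbot, AddSubgroup.mem_bot] at this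
        exact this
      rw [hzero, smul_zero]
    · simp only [hwj, if_neg hcase]
      rw [smul_smul]
      congr 1
      refine (Nat.mul_div_cancel' ?_).symm
      exact hp.dvd_choose_self (by omega) (by omega)
  refine ⟨∑ j ∈ Finset.range m, wj j, sum_mem (fun j _ => hw_mem j), ?_⟩
  rw [circPow_formula B b (m + 1)]
  have hsum1 : ∑ j ∈ Finset.range (m + 1), ((m + 1).choose (j + 1)) • iterOp B.star b b j
      = k • ∑ j ∈ Finset.range (m + 1), ((m + 1).choose (j + 1)) • e j := by
    rw [Finset.smul_sum]
    refine Finset.sum_congr rfl (fun j _ => ?_)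
    rw [hbb j, smul_comm]
  rw [hsum1]
  have hsum2 : ∑ j ∈ Finset.range (m + 1), ((m + 1).choose (j + 1)) • e j
      = (m + 1) • (c + ∑ j ∈ Finset.range m, wj j) := by
    rw [Finset.sum_range_succ' (fun j => ((m + 1).choose (j + 1)) • e j) m]
    have hlast : ((m + 1).choose (0 + 1)) • e 0 = (m + 1) • c := by
      show (m + 1).choose 1 • c = (m + 1) • c
      rw [Nat.choose_one_right]
    have hsc : (∑ x ∈ Finset.range m, ((m + 1).choose (x + 1 + 1)) • e (x + 1))
        = (m + 1) • ∑ j ∈ Finset.range m, wj j := by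
      rw [Finset.smul_sum]
      exact Finset.sum_congr rfl (fun j hj => hterm j hj)
    rw [hsc, hlast, smul_add]
    abel
  rw [hsum2, smul_smul, Nat.mul_comm k (m + 1)]

theorem circPow_add (B : LeftBrace A) (a : A) (s t : ℕ) :
    circPow B a (s + t) = B.circ (circPow B a s) (circPow B a t) := by
  induction s with
  | zero =>
    rw [Nat.zero_add]
    exact (B.one_circ _).symm
  | succ s ih =>
    rw [Nat.succ_add]
    show B.circ a (circPow B a (s + t)) = B.circ (B.circ a (circPow B a s)) (circPow B a t)
    rw [ih, B.circ_assoc]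

theorem circPow_mul (B : LeftBrace A) (a : A) (s t : ℕ) :
    circPow B a (s * t) = circPow B (circPow B a s) t := by
  induction t with
  | zero =>
    rw [Nat.mul_zero]
    rfl
  | succ t ih =>
    have h1 : circPow B a (s * (t + 1)) = B.circ (circPow B a s) (circPow B a (s * t)) := by
      rw [Nat.mul_succ, Nat.add_comm, circPow_add]
    rw [h1, ih]
    rfl

theorem key2 (B : LeftBrace A) (p n : ℕ) (hp : p.Prime) (hpn : n + 1 < p)
    (hbot : braceChainAux B n = ⊥) :
    ∀ (i : ℕ) (a : A) (d : ℕ), a ∈ braceChainAux B d →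
      ∃ w ∈ braceChainAux B (d + 1), circPow B a (p ^ i) = p ^ i • (a + w) := by
  intro i
  induction i with
  | zero =>
    intro a d _
    refine ⟨0, zero_mem _, ?_⟩
    have h1 : circPow B a (p ^ 0) = a := by
      rw [pow_zero]
      show B.circ a (circPow B a 0) = a
      show B.circ a B.one = a
      exact B.circ_one a
    rw [h1, pow_zero, add_zero, one_smul]
  | succ i ih =>
    intro a d ha
    obtain ⟨w1, hw1, hpow⟩ := ih a d ha
    have hc : a + w1 ∈ braceChainAux B d := add_mem ha (chain_succ_le B d hw1)
    obtain ⟨w2, hw2, hpow2⟩ :=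
      key1 B p n hp hpn hbot (p ^ i) d (circPow B a (p ^ i)) (a + w1) hpow hc
    refine ⟨w1 + w2, add_mem hw1 hw2, ?_⟩
    rw [pow_succ, circPow_mul B a (p ^ i) p, hpow2, Nat.mul_comm p (p ^ i), add_assoc]

theorem inv_eq_of_circ_eq_one (B : LeftBrace A) {u v : A} (h : B.circ u v = B.one) :
    v = B.inv u := by
  have h2 := congrArg (B.circ (B.inv u)) h
  rw [← B.circ_assoc, B.inv_circ, B.one_circ, B.circ_one] at h2
  exact h2

end Stmt14Aux

/-- `p^i·A` is an ideal of the brace `A` (a normal subgroup of `(A,∘)`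
closed under all `λ_a`), and it equals `A^{∘p^i}`, the subgroup of `(A,∘)` generated by
the `p^i`-th `∘`-powers (it contains all `a^{∘p^i}` and is contained in every subgroup of
`(A,∘)` containing them). -/
theorem stmt_14 (p n i : ℕ) (hp : p.Prime) (hpn : n + 1 < p)
    (A : Type u) [AddCommGroup A] (B : LeftBrace A) (hcard : Nat.card A = p ^ n) :
    ∀ S : Set A, S = {x : A | ∃ a : A, x = p ^ i • a} →
      (B.one ∈ S ∧
        (∀ x ∈ S, ∀ y ∈ S, B.circ x y ∈ S) ∧
        (∀ x ∈ S, B.inv x ∈ S) ∧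
        (∀ g : A, ∀ x ∈ S, B.circ (B.circ g x) (B.inv g) ∈ S) ∧
        (∀ a : A, ∀ x ∈ S, B.circ a x - a ∈ S)) ∧
      (∀ a : A, circPow B a (p ^ i) ∈ S) ∧
      (∀ T : Set A, B.one ∈ T → (∀ x ∈ T, ∀ y ∈ T, B.circ x y ∈ T) →
        (∀ x ∈ T, B.inv x ∈ T) → (∀ a : A, circPow B a (p ^ i) ∈ T) → S ⊆ T) := by
  intro S hS
  subst hS
  have hone0 : B.one = 0 := B.one_eq_zero
  have hbot : braceChainAux B n = ⊥ := chain_bot B p n hp hcard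
  -- membership helper
  have hmemS : ∀ x : A, (∃ a : A, x = p ^ i • a) ↔ x ∈ {x : A | ∃ a : A, x = p ^ i • a} :=
    fun x => Iff.rfl
  -- (1) one ∈ S
  have h1 : B.one ∈ {x : A | ∃ a : A, x = p ^ i • a} := by
    exact ⟨0, by rw [hone0, smul_zero]⟩
  -- (2) circ closure
  have h2 : ∀ x ∈ {x : A | ∃ a : A, x = p ^ i • a}, ∀ y ∈ {x : A | ∃ a : A, x = p ^ i • a},
      B.circ x y ∈ {x : A | ∃ a : A, x = p ^ i • a} := by
    rintro x ⟨a, rfl⟩ y ⟨b, rfl⟩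
    refine ⟨a + lamHom B (p ^ i • a) b, ?_⟩
    rw [circ_eq_add_lam, smul_add, ← map_nsmul]
  -- (3) inv closure
  have h3 : ∀ x ∈ {x : A | ∃ a : A, x = p ^ i • a},
      B.inv x ∈ {x : A | ∃ a : A, x = p ^ i • a} := by
    rintro x ⟨c, rfl⟩
    set x := p ^ i • c
    have hinv1 : lamHom B x (B.inv x) = -x := by
      have h := circ_eq_add_lam B x (B.inv x)
      rw [B.circ_inv, hone0] at h
      exact eq_neg_of_add_eq_zero_right h.symm
    have hinv2 : B.inv x = lamHom B (B.inv x) (-x) := by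
      have := congrArg (lamHom B (B.inv x)) hinv1
      rw [lam_inv_lam] at this
      exact this
    refine ⟨lamHom B (B.inv x) (-c), ?_⟩
    have hrhs : p ^ i • lamHom B (B.inv x) (-c) = lamHom B (B.inv x) (-(p ^ i • c)) := by
      rw [← map_nsmul, smul_neg]
    rw [hrhs]
    exact hinv2
  -- (5) lambda closure
  have h5 : ∀ a : A, ∀ x ∈ {x : A | ∃ a : A, x = p ^ i • a},
      B.circ a x - a ∈ {x : A | ∃ a : A, x = p ^ i • a} := by
    rintro a x ⟨c, rfl⟩
    refine ⟨lamHom B a c, ?_⟩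
    show lamHom B a (p ^ i • c) = p ^ i • lamHom B a c
    rw [map_nsmul]
  -- (6) powers in S
  have h6 : ∀ a : A, circPow B a (p ^ i) ∈ {x : A | ∃ a : A, x = p ^ i • a} := by
    intro a
    obtain ⟨w, hw, hpow⟩ := key2 B p n hp hpn hbot i a 0 (AddSubgroup.mem_top a)
    exact ⟨a + w, hpow⟩
  -- (7) minimality
  have h7 : ∀ T : Set A, B.one ∈ T → (∀ x ∈ T, ∀ y ∈ T, B.circ x y ∈ T) →
      (∀ x ∈ T, B.inv x ∈ T) → (∀ a : A, circPow B a (p ^ i) ∈ T) →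
      {x : A | ∃ a : A, x = p ^ i • a} ⊆ T := by
    intro T hT1 hT2 _hT3 hT4
    have hM : ∀ m : ℕ, ∀ c ∈ braceChainAux B (n - m), p ^ i • c ∈ T := by
      intro m
      induction m with
      | zero =>
        intro c hc
        rw [Nat.sub_zero, hbot, AddSubgroup.mem_bot] at hc
        rw [hc, smul_zero, ← hone0]
        exact hT1
      | succ m ih =>
        intro c hc
        obtain ⟨w, hw, hpow⟩ := key2 B p n hp hpn hbot i c (n - (m + 1)) hc
        set u := circPow B c (p ^ i) with hu
        have hw' : -(lamHom B (B.inv u) w) ∈ braceChainAux B (n - m) := by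
          refine neg_mem ?_
          refine lam_mem_chain B (n - m) (B.inv u) ?_
          exact chain_antitone B (by omega) hw
        have hkey : B.circ u (p ^ i • (-(lamHom B (B.inv u) w))) = p ^ i • c := by
          rw [circ_eq_add_lam, map_nsmul, map_neg, lam_lam_inv, hpow, smul_neg, smul_add]
          abel
        rw [← hkey]
        exact hT2 u (hT4 c) _ (ih _ hw')
    intro x hx
    obtain ⟨c, rfl⟩ := hx
    exact hM n c (by rw [Nat.sub_self]; exact AddSubgroup.mem_top c)
  -- (4) conjugation closure, via minimality
  have h4 : ∀ g : A, ∀ x ∈ {x : A | ∃ a : A, x = p ^ i • a},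
      B.circ (B.circ g x) (B.inv g) ∈ {x : A | ∃ a : A, x = p ^ i • a} := by
    intro g
    have hcancel1 : ∀ x : A, B.circ (B.inv g) (B.circ g x) = x := by
      intro x
      rw [← B.circ_assoc, B.inv_circ, B.one_circ]
    have hconj_mul : ∀ y z : A, B.circ (B.circ g (B.circ y z)) (B.inv g)
        = B.circ (B.circ (B.circ g y) (B.inv g)) (B.circ (B.circ g z) (B.inv g)) := by
      intro y z
      rw [B.circ_assoc (B.circ g y) (B.inv g), ← B.circ_assoc (B.inv g) (B.circ g z),
        ← B.circ_assoc (B.inv g) g z, B.inv_circ, B.one_circ]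
      rw [← B.circ_assoc g y, ← B.circ_assoc (B.circ g y) z, B.circ_assoc g y z]
    have hconjpow : ∀ (a : A) (m : ℕ),
        circPow B (B.circ (B.circ g a) (B.inv g)) m
          = B.circ (B.circ g (circPow B a m)) (B.inv g) := by
      intro a m
      induction m with
      | zero =>
        show B.one = B.circ (B.circ g B.one) (B.inv g)
        rw [B.circ_one, B.circ_inv]
      | succ m ih =>
        show B.circ (B.circ (B.circ g a) (B.inv g)) (circPow B (B.circ (B.circ g a) (B.inv g)) m)
          = B.circ (B.circ g (circPow B a (m + 1))) (B.inv g)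
        rw [ih, ← hconj_mul]
        rfl
    have hsub := h7 {y : A | B.circ (B.circ g y) (B.inv g) ∈ {x : A | ∃ a : A, x = p ^ i • a}}
      ?_ ?_ ?_ ?_
    · exact fun x hx => hsub hx
    · show B.circ (B.circ g B.one) (B.inv g) ∈ {x : A | ∃ a : A, x = p ^ i • a}
      rw [B.circ_one, B.circ_inv]
      exact h1
    · intro y hy z hz
      show B.circ (B.circ g (B.circ y z)) (B.inv g) ∈ {x : A | ∃ a : A, x = p ^ i • a}
      rw [hconj_mul]
      exact h2 _ hy _ hz
    · intro y hy
      have hprod : B.circ (B.circ (B.circ g y) (B.inv g)) (B.circ (B.circ g (B.inv y)) (B.inv g))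
          = B.one := by
        rw [B.circ_assoc g (B.inv y) (B.inv g)]
        rw [B.circ_assoc (B.circ g y) (B.inv g) (B.circ g (B.circ (B.inv y) (B.inv g)))]
        rw [hcancel1]
        rw [← B.circ_assoc (B.circ g y) (B.inv y) (B.inv g)]
        rw [B.circ_assoc g y (B.inv y), B.circ_inv, B.circ_one]
        exact B.circ_inv g
      have hinv_eq : B.circ (B.circ g (B.inv y)) (B.inv g)
          = B.inv (B.circ (B.circ g y) (B.inv g)) := inv_eq_of_circ_eq_one B hprod
      show B.circ (B.circ g (B.inv y)) (B.inv g) ∈ {x : A | ∃ a : A, x = p ^ i • a}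
      rw [hinv_eq]
      exact h3 _ hy
    · intro a
      show B.circ (B.circ g (circPow B a (p ^ i))) (B.inv g) ∈ {x : A | ∃ a : A, x = p ^ i • a}
      rw [← hconjpow]
      exact h6 _
  exact ⟨⟨h1, h2, h3, h4, h5⟩, h6, h7⟩
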